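/- Let n ≥ 2, G = C_n ⊕ C_n, let (e₁, e₂) be a basis of G, let x₁, x₂ ∈ [0, n−1], and let S = e₁^{[n−1]}·e₂^{[n−1]}·(x₁e₁+x₂e₂)^{[n−1]}. Then 0 ∉ Σ_{≤ n}(S) if and only if (−x₁k)_n + (−x₂k)_n + (k)_n > n for every integer k ∈ [1, n−1]. -/

import Mathlib

/-- `(e₁, e₂)` is a basis of the abelian group `G`, i.e. `G = ⟨e₁⟩ ⊕ ⟨e₂⟩`
(internal direct sum of the cyclic subgroups generated by `e₁` and `e₂`). -/
def IsBasis {G : Type*} [AddCommGroup G] (e₁ e₂ : G) : Prop :=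
  AddSubgroup.zmultiples e₁ ⊓ AddSubgroup.zmultiples e₂ = ⊥ ∧
  AddSubgroup.zmultiples e₁ ⊔ AddSubgroup.zmultiples e₂ = ⊤

lemma aux_split {α : Type*} (s t u : Multiset α) (h : s ≤ t + u) :
    ∃ a b, a ≤ t ∧ b ≤ u ∧ s = a + b := by
  classical
  refine ⟨s ∩ t, s - t, Multiset.inter_le_right, ?_, ?_⟩
  · rw [Multiset.sub_le_iff_le_add]; exact h.trans (by rw [add_comm])
  · ext x; simp [Multiset.count_inter, Multiset.count_sub]; omega

lemma aux_exp (n : ℕ) (v : ZMod n × ZMod n) : n • v = 0 := by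
  rw [nsmul_eq_mul]
  norm_num [Prod.ext_iff]

lemma aux_order (n : ℕ) (hn : 2 ≤ n) (e₁ e₂ : ZMod n × ZMod n)
    (hb : IsBasis e₁ e₂) : addOrderOf e₁ = n ∧ addOrderOf e₂ = n := by
  haveI : NeZero n := ⟨by omega⟩
  obtain ⟨hinf, hsup⟩ := hb
  have hd₁ : addOrderOf e₁ ∣ n := addOrderOf_dvd_of_nsmul_eq_zero (aux_exp n e₁)
  have hd₂ : addOrderOf e₂ ∣ n := addOrderOf_dvd_of_nsmul_eq_zero (aux_exp n e₂)
  have hle₁ : addOrderOf e₁ ≤ n := Nat.le_of_dvd (by omega) hd₁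
  have hle₂ : addOrderOf e₂ ≤ n := Nat.le_of_dvd (by omega) hd₂
  have hsurj : Function.Surjective
      (fun p : (AddSubgroup.zmultiples e₁) × (AddSubgroup.zmultiples e₂) =>
        (p.1 : ZMod n × ZMod n) + (p.2 : ZMod n × ZMod n)) := by
    intro x
    have hx : x ∈ AddSubgroup.zmultiples e₁ ⊔ AddSubgroup.zmultiples e₂ := by
      rw [hsup]; trivial
    rw [AddSubgroup.mem_sup] at hx
    obtain ⟨y, hy, z, hz, hyz⟩ := hx
    exact ⟨(⟨y, hy⟩, ⟨z, hz⟩), hyz⟩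
  have hcard := Nat.card_le_card_of_surjective _ hsurj
  rw [Nat.card_prod, Nat.card_prod, Nat.card_zmod, Nat.card_zmultiples,
    Nat.card_zmultiples] at hcard
  constructor <;> nlinarith

lemma aux_key (n : ℕ) (hn : 2 ≤ n) (e₁ e₂ : ZMod n × ZMod n)
    (hb : IsBasis e₁ e₂) (a b : ℕ) :
    a • e₁ + b • e₂ = 0 ↔ n ∣ a ∧ n ∣ b := by
  obtain ⟨ho₁, ho₂⟩ := aux_order n hn e₁ e₂ hb
  constructor
  · intro h
    have h1 : a • e₁ ∈ AddSubgroup.zmultiples e₁ :=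
      AddSubgroup.mem_zmultiples_iff.mpr ⟨(a : ℤ), natCast_zsmul e₁ a⟩
    have h2 : a • e₁ ∈ AddSubgroup.zmultiples e₂ := by
      have : a • e₁ = (-(b : ℤ)) • e₂ := by
        rw [neg_zsmul, natCast_zsmul, eq_neg_iff_add_eq_zero, h]
      exact AddSubgroup.mem_zmultiples_iff.mpr ⟨-(b : ℤ), this.symm⟩
    have h3 : a • e₁ ∈ AddSubgroup.zmultiples e₁ ⊓ AddSubgroup.zmultiples e₂ :=
      ⟨h1, h2⟩
    rw [hb.1, AddSubgroup.mem_bot] at h3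
    have h4 : b • e₂ = 0 := by rwa [h3, zero_add] at h
    constructor
    · rw [← ho₁]; exact addOrderOf_dvd_of_nsmul_eq_zero h3
    · rw [← ho₂]; exact addOrderOf_dvd_of_nsmul_eq_zero h4
  · rintro ⟨hda, hdb⟩
    have h1 : a • e₁ = 0 := by
      rw [← addOrderOf_dvd_iff_nsmul_eq_zero, ho₁]; exact hda
    have h2 : b • e₂ = 0 := by
      rw [← addOrderOf_dvd_iff_nsmul_eq_zero, ho₂]; exact hdb
    rw [h1, h2, add_zero]

theorem stmt_6 (n : ℕ) (hn : 2 ≤ n) (e₁ e₂ : ZMod n × ZMod n)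
    (hbasis : IsBasis e₁ e₂) (x₁ x₂ : ℕ) (hx₁ : x₁ ≤ n - 1) (hx₂ : x₂ ≤ n - 1)
    (S : Multiset (ZMod n × ZMod n))
    (hSdef : S = Multiset.replicate (n - 1) e₁ + Multiset.replicate (n - 1) e₂ +
        Multiset.replicate (n - 1) (x₁ • e₁ + x₂ • e₂)) :
    (∀ T : Multiset (ZMod n × ZMod n), T ≤ S → T ≠ 0 →
        Multiset.card T ≤ n → T.sum ≠ 0) ↔
    (∀ k : ℕ, 1 ≤ k → k ≤ n - 1 →
      ((-(x₁ : ℤ) * k) % n) + ((-(x₂ : ℤ) * k) % n) + ((k : ℤ) % n) > n) := by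
  have hn0 : (0 : ℤ) < n := by exact_mod_cast Nat.lt_of_lt_of_le (by norm_num) hn
  have key := aux_key n hn e₁ e₂ hbasis
  set g : ZMod n × ZMod n := x₁ • e₁ + x₂ • e₂ with hg
  have hsum3 : ∀ a b c : ℕ,
      (Multiset.replicate a e₁ + Multiset.replicate b e₂ +
        Multiset.replicate c g).sum = (a + c * x₁) • e₁ + (b + c * x₂) • e₂ := by
    intro a b c
    rw [Multiset.sum_add, Multiset.sum_add, Multiset.sum_replicate,
      Multiset.sum_replicate, Multiset.sum_replicate, hg, smul_add,
      add_nsmul, add_nsmul, mul_smul, mul_smul]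
    abel
  constructor
  · -- LHS → RHS
    intro hL k hk1 hk2
    by_contra hlt
    push_neg at hlt
    set A : ℤ := (-(x₁ : ℤ) * k) % n with hA
    set B : ℤ := (-(x₂ : ℤ) * k) % n with hB
    have hA0 : 0 ≤ A := Int.emod_nonneg _ (by omega)
    have hAn : A < n := Int.emod_lt_of_pos _ hn0
    have hB0 : 0 ≤ B := Int.emod_nonneg _ (by omega)
    have hBn : B < n := Int.emod_lt_of_pos _ hn0
    have hkn : ((k : ℤ) % n) = k :=
      Int.emod_eq_of_lt (by positivity) (by exact_mod_cast by omega)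
    set a : ℕ := A.toNat with ha
    set b : ℕ := B.toNat with hbn
    set T : Multiset (ZMod n × ZMod n) := Multiset.replicate a e₁ +
      Multiset.replicate b e₂ + Multiset.replicate k g with hT
    have hTle : T ≤ S := by
      rw [hSdef, hT]
      exact add_le_add (add_le_add
        ((Multiset.replicate_le_replicate e₁).mpr (by omega))
        ((Multiset.replicate_le_replicate e₂).mpr (by omega)))
        ((Multiset.replicate_le_replicate g).mpr (by omega))
    have hT0 : T ≠ 0 := by
      intro h
      have := congrArg Multiset.card h
      simp [hT] at this
      omega
    have hcard : Multiset.card T ≤ n := by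
      simp only [hT, Multiset.card_add, Multiset.card_replicate]
      rw [hkn] at hlt
      omega
    refine hL T hTle hT0 hcard ?_
    rw [hT, hsum3]
    rw [key]
    constructor
    · have : ((a : ℤ) + k * x₁) % n = 0 := by
        have h1 : (a : ℤ) = A := by rw [ha]; exact Int.toNat_of_nonneg hA0
        rw [h1, hA, Int.emod_add_emod]
        have : (-(x₁ : ℤ) * k + k * x₁) = 0 := by ring
        rw [this, Int.zero_emod]
      have := Int.dvd_of_emod_eq_zero this
      exact_mod_cast this
    · have : ((b : ℤ) + k * x₂) % n = 0 := by
        have h1 : (b : ℤ) = B := by rw [hbn]; exact Int.toNat_of_nonneg hB0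
        rw [h1, hB, Int.emod_add_emod]
        have : (-(x₂ : ℤ) * k + k * x₂) = 0 := by ring
        rw [this, Int.zero_emod]
      have := Int.dvd_of_emod_eq_zero this
      exact_mod_cast this
  · -- RHS → LHS
    intro hR T hTle hT0 hcard hsum
    rw [hSdef] at hTle
    obtain ⟨P, C, hP, hC, hTPC⟩ := aux_split T _ _ hTle
    obtain ⟨Qa, Qb, hQa, hQb, hPQ⟩ := aux_split P _ _ hP
    obtain ⟨a, han, hQa'⟩ := Multiset.le_replicate_iff.mp hQa
    obtain ⟨b, hbn, hQb'⟩ := Multiset.le_replicate_iff.mp hQb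
    obtain ⟨c, hcn, hC'⟩ := Multiset.le_replicate_iff.mp hC
    subst hQa' hQb' hC' hPQ hTPC
    rw [hsum3] at hsum
    rw [key] at hsum
    obtain ⟨hda, hdb⟩ := hsum
    have hcardT : a + b + c ≤ n := by
      simpa [Multiset.card_add, Multiset.card_replicate] using hcard
    have habc : a + b + c ≠ 0 := by
      intro h
      apply hT0
      have : a = 0 ∧ b = 0 ∧ c = 0 := by omega
      simp [this.1, this.2.1, this.2.2]
    rcases Nat.eq_zero_or_pos c with hc0 | hc1
    · subst hc0
      simp only [Nat.mul_zero, Nat.zero_mul, mul_zero, zero_mul, add_zero] at hda hdb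
      have ha0 : a = 0 := Nat.eq_zero_of_dvd_of_lt hda (by omega)
      have hb0 : b = 0 := Nat.eq_zero_of_dvd_of_lt hdb (by omega)
      omega
    · have hRc := hR c hc1 hcn
      obtain ⟨q, hq⟩ : (n : ℤ) ∣ ((a : ℤ) + c * x₁) := by exact_mod_cast hda
      obtain ⟨r, hr⟩ : (n : ℤ) ∣ ((b : ℤ) + c * x₂) := by exact_mod_cast hdb
      have hAa : (-(x₁ : ℤ) * c) % n = a := by
        have h1 : (-(x₁ : ℤ) * c) = a + n * (-q) := by linarith [hq]
        rw [h1, Int.add_mul_emod_self_left]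
        exact Int.emod_eq_of_lt (by positivity) (by exact_mod_cast by omega)
      have hBb : (-(x₂ : ℤ) * c) % n = b := by
        have h1 : (-(x₂ : ℤ) * c) = b + n * (-r) := by linarith [hr]
        rw [h1, Int.add_mul_emod_self_left]
        exact Int.emod_eq_of_lt (by positivity) (by exact_mod_cast by omega)
      have hcc : ((c : ℤ) % n) = c :=
        Int.emod_eq_of_lt (by positivity) (by exact_mod_cast by omega)
      rw [hAa, hBb, hcc] at hRc
      have : (n : ℤ) < a + b + c := hRc
      have : n < a + b + c := by exact_mod_cast this
      omega
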